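/- Let a be symmetric positive definite, A skew-symmetric (both d×d), and V ∈ ℝ^{d×m} with linearly independent columns. Set Π := Vᵀ(a−A)⁻¹V and Π₀ := Vᵀa⁻¹V. Then ½(Π⁻¹ + Π⁻ᵀ) ⪰ Π₀⁻¹ in the Loewner order. -/

import Mathlib

open Matrix

section Helpers

set_option linter.unusedSectionVars false

variable {n m : Type*} [Fintype n] [Fintype m] [DecidableEq n] [DecidableEq m]

/-- Quadratic positivity predicate (for possibly non-symmetric real matrices). -/
def QP (M : Matrix n n ℝ) : Prop := ∀ x : n → ℝ, x ≠ 0 → 0 < x ⬝ᵥ M *ᵥ x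

lemma QP.isUnit {M : Matrix n n ℝ} (h : QP M) : IsUnit M := by
  rw [← Matrix.mulVec_injective_iff_isUnit]
  intro x y hxy
  by_contra hne
  have hz : M *ᵥ (x - y) = 0 := by rw [Matrix.mulVec_sub, hxy, sub_self]
  have hx0 : x - y ≠ 0 := sub_ne_zero.2 hne
  have := h _ hx0
  rw [hz, dotProduct_zero] at this
  exact lt_irrefl 0 this

lemma QP.inv {M : Matrix n n ℝ} (h : QP M) : QP M⁻¹ := by
  intro x hx
  have hu := h.isUnit
  have hdet := (Matrix.isUnit_iff_isUnit_det M).1 hu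
  set y := M⁻¹ *ᵥ x with hy
  have hxy : M *ᵥ y = x := by
    rw [hy, Matrix.mulVec_mulVec, Matrix.mul_nonsing_inv _ hdet, Matrix.one_mulVec]
  have hy0 : y ≠ 0 := by
    intro h0
    rw [h0, Matrix.mulVec_zero] at hxy
    exact hx hxy.symm
  calc (0:ℝ) < y ⬝ᵥ M *ᵥ y := h y hy0
    _ = (M *ᵥ y) ⬝ᵥ y := dotProduct_comm _ _
    _ = x ⬝ᵥ M⁻¹ *ᵥ x := by rw [hxy]

lemma QP.conj {M : Matrix n n ℝ} (h : QP M) (V : Matrix n m ℝ)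
    (hV : Function.Injective V.mulVec) : QP (Vᵀ * M * V) := by
  intro x hx
  have hVx : V *ᵥ x ≠ 0 := by
    intro h0
    exact hx (hV (by rw [h0, Matrix.mulVec_zero]))
  have : (Vᵀ * M * V) *ᵥ x = Vᵀ *ᵥ (M *ᵥ (V *ᵥ x)) := by
    rw [Matrix.mulVec_mulVec, Matrix.mulVec_mulVec, Matrix.mul_assoc]
  rw [this, Matrix.dotProduct_mulVec, Matrix.vecMul_transpose]
  exact h _ hVx

lemma psd_conj {M : Matrix n n ℝ} (h : M.PosSemidef) (N : Matrix n m ℝ) :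
    (Nᵀ * M * N).PosSemidef := by
  have := h.conjTranspose_mul_mul_same N
  rwa [conjTranspose_eq_transpose_of_trivial] at this

lemma posSemidef_transpose_mul_self' (N : Matrix n m ℝ) : (Nᵀ * N).PosSemidef := by
  have := Matrix.posSemidef_conjTranspose_mul_self N
  rwa [conjTranspose_eq_transpose_of_trivial] at this

lemma pd_of_qp {M : Matrix n n ℝ} (hsym : Mᵀ = M) (h : QP M) : M.PosDef := by
  refine Matrix.PosDef.of_dotProduct_mulVec_pos (by rwa [Matrix.IsHermitian, conjTranspose_eq_transpose_of_trivial]) fun x hx => ?_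
  simpa using h x hx

lemma pd_conj {M : Matrix n n ℝ} (h : M.PosDef) (N : Matrix n m ℝ)
    (hN : Function.Injective N.mulVec) : (Nᵀ * M * N).PosDef := by
  have hsym : (Nᵀ * M * N)ᵀ = Nᵀ * M * N := by
    have hMsym : Mᵀ = M := by
      have := h.isHermitian
      rwa [Matrix.IsHermitian, conjTranspose_eq_transpose_of_trivial] at this
    rw [Matrix.transpose_mul, Matrix.transpose_mul, transpose_transpose, hMsym,
      Matrix.mul_assoc]
  refine pd_of_qp hsym (QP.conj (fun x hx => ?_) N hN)
  simpa using h.dotProduct_mulVec_pos hx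

lemma qp_of_pd {M : Matrix n n ℝ} (h : M.PosDef) : QP M := fun x hx => by simpa using h.dotProduct_mulVec_pos hx

/-- Projection bound: for `a` positive definite and `UᵀaU` invertible,
`a⁻¹ - U (UᵀaU)⁻¹ Uᵀ ⪰ 0`. -/
lemma proj_psd {a : Matrix n n ℝ} (ha : a.PosDef) (U : Matrix n m ℝ)
    (hQ : IsUnit (Uᵀ * a * U)) : (a⁻¹ - U * (Uᵀ * a * U)⁻¹ * Uᵀ).PosSemidef := by
  obtain ⟨s, hs_psd, hss⟩ : ∃ s : Matrix n n ℝ, s.PosSemidef ∧ s * s = a :=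
    by open scoped MatrixOrder in exact ⟨CFC.sqrt a, (CFC.sqrt_nonneg a).posSemidef, CFC.sqrt_mul_sqrt_self a ha.posSemidef.nonneg⟩
  have hsT : sᵀ = s := by
    have := hs_psd.1
    rwa [Matrix.IsHermitian, conjTranspose_eq_transpose_of_trivial] at this
  have hsdet : IsUnit s.det := by
    have hda : IsUnit a.det := (Matrix.isUnit_iff_isUnit_det a).1 ha.isUnit
    rw [← hss, Matrix.det_mul] at hda
    exact isUnit_of_mul_isUnit_left hda
  have hs1 : s * s⁻¹ = 1 := Matrix.mul_nonsing_inv _ hsdet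
  have hs2 : s⁻¹ * s = 1 := Matrix.nonsing_inv_mul _ hsdet
  have hsiT : (s⁻¹)ᵀ = s⁻¹ := by rw [Matrix.transpose_nonsing_inv, hsT]
  have hainv : a⁻¹ = s⁻¹ * s⁻¹ := by rw [← hss, Matrix.mul_inv_rev]
  obtain ⟨B, rfl⟩ : ∃ B : Matrix n m ℝ, U = s⁻¹ * B :=
    ⟨s * U, by rw [← Matrix.mul_assoc, hs2, Matrix.one_mul]⟩
  have hUaU : (s⁻¹ * B)ᵀ * a * (s⁻¹ * B) = Bᵀ * B := by
    rw [Matrix.transpose_mul, hsiT, ← hss]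
    calc Bᵀ * s⁻¹ * (s * s) * (s⁻¹ * B)
        = Bᵀ * (s⁻¹ * (s * (s * (s⁻¹ * B)))) := by simp only [Matrix.mul_assoc]
      _ = Bᵀ * B := by
          rw [← Matrix.mul_assoc s s⁻¹ B, hs1, Matrix.one_mul, ← Matrix.mul_assoc s⁻¹ s B,
            hs2, Matrix.one_mul]
  rw [hUaU] at hQ ⊢
  have hQBdet : IsUnit (Bᵀ * B).det := (Matrix.isUnit_iff_isUnit_det _).1 hQ
  have hMiT : ((Bᵀ * B)⁻¹)ᵀ = (Bᵀ * B)⁻¹ := by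
    rw [Matrix.transpose_nonsing_inv, Matrix.transpose_mul, transpose_transpose]
  have hPT : (1 - B * (Bᵀ * B)⁻¹ * Bᵀ)ᵀ = 1 - B * (Bᵀ * B)⁻¹ * Bᵀ := by
    rw [Matrix.transpose_sub, Matrix.transpose_one, Matrix.transpose_mul,
      Matrix.transpose_mul, transpose_transpose, hMiT, Matrix.mul_assoc]
  have hPP : (B * (Bᵀ * B)⁻¹ * Bᵀ) * (B * (Bᵀ * B)⁻¹ * Bᵀ) = B * (Bᵀ * B)⁻¹ * Bᵀ := by
    calc (B * (Bᵀ * B)⁻¹ * Bᵀ) * (B * (Bᵀ * B)⁻¹ * Bᵀ)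
        = B * (Bᵀ * B)⁻¹ * ((Bᵀ * B) * ((Bᵀ * B)⁻¹ * Bᵀ)) := by
          simp only [Matrix.mul_assoc]
      _ = B * (Bᵀ * B)⁻¹ * Bᵀ := by
          rw [← Matrix.mul_assoc (Bᵀ * B), Matrix.mul_nonsing_inv _ hQBdet, Matrix.one_mul]
  have h1P : (1 - B * (Bᵀ * B)⁻¹ * Bᵀ) * (1 - B * (Bᵀ * B)⁻¹ * Bᵀ)
      = 1 - B * (Bᵀ * B)⁻¹ * Bᵀ := by
    rw [Matrix.sub_mul, Matrix.mul_sub, Matrix.mul_sub]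
    simp only [Matrix.one_mul, Matrix.mul_one]
    rw [hPP]
    abel
  have key : a⁻¹ - s⁻¹ * B * (Bᵀ * B)⁻¹ * (s⁻¹ * B)ᵀ
      = ((1 - B * (Bᵀ * B)⁻¹ * Bᵀ) * s⁻¹)ᵀ * ((1 - B * (Bᵀ * B)⁻¹ * Bᵀ) * s⁻¹) := by
    have hRHS : ((1 - B * (Bᵀ * B)⁻¹ * Bᵀ) * s⁻¹)ᵀ * ((1 - B * (Bᵀ * B)⁻¹ * Bᵀ) * s⁻¹)
        = s⁻¹ * (1 - B * (Bᵀ * B)⁻¹ * Bᵀ) * s⁻¹ := by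
      rw [Matrix.transpose_mul, hsiT, hPT, Matrix.mul_assoc s⁻¹,
        ← Matrix.mul_assoc (1 - B * (Bᵀ * B)⁻¹ * Bᵀ), h1P, ← Matrix.mul_assoc]
    rw [hRHS, Matrix.transpose_mul, hsiT, hainv, Matrix.mul_sub, Matrix.sub_mul,
      Matrix.mul_one]
    congr 1
    simp only [Matrix.mul_assoc]
  rw [key]
  exact posSemidef_transpose_mul_self' _

/-- Loewner antitonicity of inverse on positive definite matrices. -/
lemma inv_sub_inv_psd {S P : Matrix n n ℝ} (hS : S.PosDef) (hP : P.PosDef)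
    (h : (P - S).PosSemidef) : (S⁻¹ - P⁻¹).PosSemidef := by
  have hPdet : IsUnit P.det := (Matrix.isUnit_iff_isUnit_det P).1 hP.isUnit
  have hSdet : IsUnit S.det := (Matrix.isUnit_iff_isUnit_det S).1 hS.isUnit
  have hp1 : P⁻¹ * P = 1 := Matrix.nonsing_inv_mul _ hPdet
  have hp2 : P * P⁻¹ = 1 := Matrix.mul_nonsing_inv _ hPdet
  have hs1 : S⁻¹ * S = 1 := Matrix.nonsing_inv_mul _ hSdet
  have hs2 : S * S⁻¹ = 1 := Matrix.mul_nonsing_inv _ hSdet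
  have hpT : (P⁻¹)ᵀ = P⁻¹ := by
    have := hP.inv.isHermitian
    rwa [Matrix.IsHermitian, conjTranspose_eq_transpose_of_trivial] at this
  have hDT : (P - S)ᵀ = P - S := by
    have := h.1
    rwa [Matrix.IsHermitian, conjTranspose_eq_transpose_of_trivial] at this
  have key : S⁻¹ - P⁻¹ = (P⁻¹)ᵀ * (P - S) * P⁻¹
      + ((P - S) * P⁻¹)ᵀ * S⁻¹ * ((P - S) * P⁻¹) := by
    rw [hpT, Matrix.transpose_mul, hpT, hDT]
    have e1 : P⁻¹ * (P - S) = 1 - P⁻¹ * S := by rw [Matrix.mul_sub, hp1]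
    have e2 : (P - S) * P⁻¹ = 1 - S * P⁻¹ := by rw [Matrix.sub_mul, hp2]
    have e3 : P⁻¹ * (P - S) * P⁻¹ = P⁻¹ - P⁻¹ * S * P⁻¹ := by
      rw [e1, Matrix.sub_mul, Matrix.one_mul]
    have e4 : P⁻¹ * (P - S) * S⁻¹ = S⁻¹ - P⁻¹ := by
      rw [e1, Matrix.sub_mul, Matrix.one_mul, Matrix.mul_assoc, hs2, Matrix.mul_one]
    calc S⁻¹ - P⁻¹
        = (P⁻¹ - P⁻¹ * S * P⁻¹) + ((S⁻¹ - P⁻¹) * (1 - S * P⁻¹)) := by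
          rw [Matrix.sub_mul, Matrix.mul_sub, Matrix.mul_sub, Matrix.mul_one,
            Matrix.mul_one, ← Matrix.mul_assoc, hs1, Matrix.one_mul,
            ← Matrix.mul_assoc P⁻¹ S P⁻¹]
          abel
      _ = P⁻¹ * (P - S) * P⁻¹ + P⁻¹ * (P - S) * S⁻¹ * ((P - S) * P⁻¹) := by
          rw [e3, e4, e2]
      _ = P⁻¹ * (P - S) * P⁻¹ + P⁻¹ * (P - S) * (S⁻¹ * ((P - S) * P⁻¹)) := by
          simp only [Matrix.mul_assoc]
      _ = P⁻¹ * (P - S) * P⁻¹ + (P⁻¹ * (P - S)) * S⁻¹ * ((P - S) * P⁻¹) := by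
          simp only [Matrix.mul_assoc]
  rw [key]
  have t1 : ((P⁻¹)ᵀ * (P - S) * P⁻¹).PosSemidef := by
    have := h.conjTranspose_mul_mul_same (P⁻¹)
    rwa [conjTranspose_eq_transpose_of_trivial] at this
  have t2 : (((P - S) * P⁻¹)ᵀ * S⁻¹ * ((P - S) * P⁻¹)).PosSemidef := by
    have := hS.inv.posSemidef.conjTranspose_mul_mul_same ((P - S) * P⁻¹)
    rwa [conjTranspose_eq_transpose_of_trivial] at this
  exact t1.add t2

end Helpers

set_option maxHeartbeats 1000000 in
/-- With `Π := Vᵀ(a-A)⁻¹V` and `Π₀ := Vᵀa⁻¹V`, one has `½(Π⁻¹ + Π⁻ᵀ) ⪰ Π₀⁻¹` in the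
Loewner order. -/
theorem stmt12 {d m : ℕ} (a A : Matrix (Fin d) (Fin d) ℝ) (V : Matrix (Fin d) (Fin m) ℝ)
    (ha : a.PosDef) (hA : Aᵀ = -A) (hV : Function.Injective V.mulVec) :
    ((1 / 2 : ℝ) • ((Vᵀ * (a - A)⁻¹ * V)⁻¹ + ((Vᵀ * (a - A)⁻¹ * V)⁻¹)ᵀ)
      - (Vᵀ * a⁻¹ * V)⁻¹).PosSemidef := by
  classical
  -- basic facts about `a`, `a - A`, `a + A`
  have haT : aᵀ = a := by
    have := ha.isHermitian
    rwa [Matrix.IsHermitian, conjTranspose_eq_transpose_of_trivial] at this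
  have hadet : IsUnit a.det := (Matrix.isUnit_iff_isUnit_det a).1 ha.isUnit
  have ha1 : a * a⁻¹ = 1 := Matrix.mul_nonsing_inv _ hadet
  have ha2 : a⁻¹ * a = 1 := Matrix.nonsing_inv_mul _ hadet
  have hqa : QP a := qp_of_pd ha
  have hAq : ∀ x : Fin d → ℝ, x ⬝ᵥ A *ᵥ x = 0 := by
    intro x
    have h1 : x ⬝ᵥ A *ᵥ x = (Aᵀ *ᵥ x) ⬝ᵥ x := by
      rw [Matrix.dotProduct_mulVec, ← Matrix.mulVec_transpose]
    rw [hA, Matrix.neg_mulVec, neg_dotProduct, dotProduct_comm] at h1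
    rw [dotProduct_comm]
    linarith
  have hqB : QP (a - A) := by
    intro x hx
    have h2 : x ⬝ᵥ (a - A) *ᵥ x = x ⬝ᵥ a *ᵥ x - x ⬝ᵥ A *ᵥ x := by
      rw [Matrix.sub_mulVec, dotProduct_sub]
    rw [h2, hAq, sub_zero]
    exact hqa x hx
  have hqC : QP (a + A) := by
    intro x hx
    have h2 : x ⬝ᵥ (a + A) *ᵥ x = x ⬝ᵥ a *ᵥ x + x ⬝ᵥ A *ᵥ x := by
      rw [Matrix.add_mulVec, dotProduct_add]
    rw [h2, hAq, add_zero]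
    exact hqa x hx
  have hB := hqB.isUnit
  have hC := hqC.isUnit
  have hBdet := (Matrix.isUnit_iff_isUnit_det _).1 hB
  have hCdet := (Matrix.isUnit_iff_isUnit_det _).1 hC
  have hB1 : (a - A) * (a - A)⁻¹ = 1 := Matrix.mul_nonsing_inv _ hBdet
  have hB2 : (a - A)⁻¹ * (a - A) = 1 := Matrix.nonsing_inv_mul _ hBdet
  have hC1 : (a + A) * (a + A)⁻¹ = 1 := Matrix.mul_nonsing_inv _ hCdet
  have hC2 : (a + A)⁻¹ * (a + A) = 1 := Matrix.nonsing_inv_mul _ hCdet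
  have hBT : (a - A)ᵀ = a + A := by rw [Matrix.transpose_sub, haT, hA, sub_neg_eq_add]
  have hCT : (a + A)ᵀ = a - A := by rw [Matrix.transpose_add, haT, hA, ← sub_eq_add_neg]
  have hBiT : ((a - A)⁻¹)ᵀ = (a + A)⁻¹ := by rw [Matrix.transpose_nonsing_inv, hBT]
  have hCiT : ((a + A)⁻¹)ᵀ = (a - A)⁻¹ := by rw [Matrix.transpose_nonsing_inv, hCT]
  -- abbreviations
  set Pi : Matrix (Fin m) (Fin m) ℝ := Vᵀ * (a - A)⁻¹ * V with hPidef
  set Pi0 : Matrix (Fin m) (Fin m) ℝ := Vᵀ * a⁻¹ * V with hPi0def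
  set U : Matrix (Fin d) (Fin m) ℝ := (a + A)⁻¹ * V with hU
  have hUT : Uᵀ = Vᵀ * (a - A)⁻¹ := by rw [hU, Matrix.transpose_mul, hCiT]
  have hUinj : Function.Injective U.mulVec := by
    intro x y hxy
    apply hV
    have hCiu : IsUnit (a + A)⁻¹ := Matrix.isUnit_nonsing_inv_iff.2 hC
    apply Matrix.mulVec_injective_iff_isUnit.2 hCiu
    simpa only [Matrix.mulVec_mulVec, ← hU] using hxy
  set Q₁ : Matrix (Fin m) (Fin m) ℝ := Uᵀ * a * U with hQ₁
  set Q₂ : Matrix (Fin m) (Fin m) ℝ := Uᵀ * (A * U) with hQ₂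
  have hUB : Uᵀ * (a - A) = Vᵀ := by rw [hUT, Matrix.mul_assoc, hB2, Matrix.mul_one]
  have hCU : (a + A) * U = V := by rw [hU, ← Matrix.mul_assoc, hC1, Matrix.one_mul]
  -- `Pi = Q₁ + Q₂` and `Piᵀ = Q₁ - Q₂`
  have hPi : Pi = Q₁ + Q₂ := by
    have h1 : a * U + A * U = V := by rw [← Matrix.add_mul, hCU]
    calc Pi = Uᵀ * V := by rw [hPidef, hUT]
      _ = Uᵀ * (a * U + A * U) := by rw [h1]
      _ = Q₁ + Q₂ := by rw [Matrix.mul_add, hQ₁, hQ₂, Matrix.mul_assoc]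
  have hPiT : Piᵀ = Q₁ - Q₂ := by
    have h0 : Piᵀ = Vᵀ * ((a + A)⁻¹ * V) := by
      rw [hPidef, Matrix.transpose_mul, Matrix.transpose_mul, transpose_transpose, hBiT]
    calc Piᵀ = Vᵀ * U := by rw [h0, hU]
      _ = Vᵀ * ((a - A)⁻¹ * ((a - A) * U)) := by
          rw [← Matrix.mul_assoc (a - A)⁻¹, hB2, Matrix.one_mul]
      _ = Vᵀ * (a - A)⁻¹ * ((a - A) * U) := by rw [Matrix.mul_assoc]
      _ = Uᵀ * ((a - A) * U) := by rw [hUT]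
      _ = Uᵀ * (a * U - A * U) := by rw [Matrix.sub_mul]
      _ = Q₁ - Q₂ := by rw [Matrix.mul_sub, hQ₁, hQ₂, Matrix.mul_assoc]
  -- invertibility and positivity
  have hqPi : QP Pi := QP.conj hqB.inv V hV
  have hPiu := hqPi.isUnit
  have hPidet := (Matrix.isUnit_iff_isUnit_det Pi).1 hPiu
  have hPi1 : Pi * Pi⁻¹ = 1 := Matrix.mul_nonsing_inv _ hPidet
  have hPi2 : Pi⁻¹ * Pi = 1 := Matrix.nonsing_inv_mul _ hPidet
  have hPiTu : IsUnit Piᵀ := (Matrix.isUnit_transpose _).2 hPiu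
  have hPiTdet := (Matrix.isUnit_iff_isUnit_det Piᵀ).1 hPiTu
  have hPiT1 : Piᵀ * (Piᵀ)⁻¹ = 1 := Matrix.mul_nonsing_inv _ hPiTdet
  have hQ1pd : Q₁.PosDef := pd_conj ha U hUinj
  have hQ1u := hQ1pd.isUnit
  have hQ1det := (Matrix.isUnit_iff_isUnit_det Q₁).1 hQ1u
  have hQ11 : Q₁⁻¹ * Q₁ = 1 := Matrix.nonsing_inv_mul _ hQ1det
  have hQ12 : Q₁ * Q₁⁻¹ = 1 := Matrix.mul_nonsing_inv _ hQ1det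
  -- the symmetrized matrix `S`
  set S : Matrix (Fin m) (Fin m) ℝ := Piᵀ * Q₁⁻¹ * Pi with hS
  have hSeq : S = Q₁ - Q₂ * Q₁⁻¹ * Q₂ := by
    rw [hS, hPiT, hPi, Matrix.sub_mul, hQ12, Matrix.sub_mul, Matrix.one_mul,
      Matrix.mul_add, Matrix.mul_assoc Q₂ Q₁⁻¹ Q₁, hQ11, Matrix.mul_one]
    abel
  have hSpd : S.PosDef := pd_conj hQ1pd.inv Pi (Matrix.mulVec_injective_iff_isUnit.2 hPiu)
  -- ½(Π⁻¹ + Π⁻ᵀ) = S⁻¹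
  have hts : (Pi⁻¹)ᵀ = (Piᵀ)⁻¹ := Matrix.transpose_nonsing_inv Pi
  have hSinv : S⁻¹ = Pi⁻¹ * (Q₁ * (Piᵀ)⁻¹) := by
    rw [hS, Matrix.mul_inv_rev, Matrix.mul_inv_rev,
      Matrix.nonsing_inv_nonsing_inv _ hQ1det]
  have hsum : Pi + Piᵀ = Q₁ + Q₁ := by rw [hPiT, hPi]; abel
  have hkey : S⁻¹ + S⁻¹ = Pi⁻¹ + (Piᵀ)⁻¹ := by
    calc S⁻¹ + S⁻¹ = Pi⁻¹ * ((Pi + Piᵀ) * (Piᵀ)⁻¹) := by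
          rw [hSinv, hsum, Matrix.add_mul, Matrix.mul_add]
      _ = Pi⁻¹ * (Pi * (Piᵀ)⁻¹) + Pi⁻¹ * (Piᵀ * (Piᵀ)⁻¹) := by
          rw [Matrix.add_mul, Matrix.mul_add]
      _ = Pi⁻¹ + (Piᵀ)⁻¹ := by
          rw [hPiT1, Matrix.mul_one, ← Matrix.mul_assoc, hPi2, Matrix.one_mul]
          abel
  have hhalf : (1 / 2 : ℝ) • (Pi⁻¹ + (Pi⁻¹)ᵀ) = S⁻¹ := by
    rw [hts, ← hkey, ← two_smul ℝ (S⁻¹), smul_smul]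
    norm_num
  -- `Pi0` is positive definite
  have hPi0pd : Pi0.PosDef := pd_conj ha.inv V hV
  -- the gap `Pi0 - S` is positive semidefinite
  have hgap : (Pi0 - S).PosSemidef := by
    set W : Matrix (Fin d) (Fin m) ℝ := A * U with hW
    have hWT : Wᵀ = -(Uᵀ * A) := by
      rw [hW, Matrix.transpose_mul, hA, Matrix.mul_neg]
    have hcore : (a - A) * a⁻¹ * (a + A) = a - A * a⁻¹ * A := by
      rw [Matrix.sub_mul, ha1, Matrix.sub_mul, Matrix.one_mul, Matrix.mul_add,
        Matrix.mul_assoc A a⁻¹ a, ha2, Matrix.mul_one]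
      abel
    have ha_eq : a = (a - A) * a⁻¹ * (a + A) + A * a⁻¹ * A := by
      rw [hcore]; abel
    have hQ1split : Q₁ = Pi0 + Uᵀ * (A * a⁻¹ * A) * U := by
      have hmid : Uᵀ * ((a - A) * a⁻¹ * (a + A)) * U = Pi0 := by
        calc Uᵀ * ((a - A) * a⁻¹ * (a + A)) * U
            = (Uᵀ * (a - A)) * a⁻¹ * ((a + A) * U) := by simp only [Matrix.mul_assoc]
          _ = Pi0 := by rw [hUB, hCU, hPi0def]
      calc Q₁ = Uᵀ * ((a - A) * a⁻¹ * (a + A) + A * a⁻¹ * A) * U := by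
            rw [hQ₁]; conv_lhs => rw [ha_eq]
        _ = Uᵀ * ((a - A) * a⁻¹ * (a + A)) * U + Uᵀ * (A * a⁻¹ * A) * U := by
            rw [Matrix.mul_add, Matrix.add_mul]
        _ = Pi0 + Uᵀ * (A * a⁻¹ * A) * U := by rw [hmid]
    have hw1 : Wᵀ * a⁻¹ * W = -(Uᵀ * (A * a⁻¹ * A) * U) := by
      rw [hWT, hW, Matrix.neg_mul, Matrix.neg_mul, neg_inj]
      simp only [Matrix.mul_assoc]
    have hw2 : Wᵀ * (U * Q₁⁻¹ * Uᵀ) * W = -(Q₂ * Q₁⁻¹ * Q₂) := by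
      rw [hWT, hQ₂, hW, Matrix.neg_mul, Matrix.neg_mul, neg_inj]
      simp only [Matrix.mul_assoc]
    have hform : Pi0 - S = Wᵀ * (a⁻¹ - U * Q₁⁻¹ * Uᵀ) * W := by
      rw [Matrix.mul_sub, Matrix.sub_mul, hw1, hw2, hSeq, hQ1split]
      abel
    rw [hform]
    exact psd_conj (proj_psd ha U hQ1u) W
  rw [hhalf]
  exact inv_sub_inv_psd hSpd hPi0pd hgap
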